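/- arXiv:1001.2408 — 2 statements merged into one kernel-verified Lean document; each statement's English description precedes it below -/
import Mathlib

section
/- Let Γ be a group and ρ : Γ → SU(2) a group homomorphism whose image is abelian (ρ(γ) and ρ(δ) commute for all γ, δ ∈ Γ). Then there exists g ∈ SU(2) such that g·ρ(γ)·g⁻¹ lies in the diagonal torus T for every γ ∈ Γ. -/
open Matrix

noncomputable section

/-- SU(2) as the special unitary group of 2×2 complex matrices. -/
abbrev SU2 : Submonoid (Matrix (Fin 2) (Fin 2) ℂ) := Matrix.specialUnitaryGroup (Fin 2) ℂ

instance : Group SU2 :=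
  { (inferInstance : Monoid SU2) with
    inv := fun A => ⟨star A.val, Matrix.mem_specialUnitaryGroup_iff.mpr
      ⟨Unitary.star_mem (Matrix.mem_specialUnitaryGroup_iff.mp A.2).1, by
        have h2 : A.val.det = 1 := (Matrix.mem_specialUnitaryGroup_iff.mp A.2).2
        simp [Matrix.star_eq_conjTranspose, Matrix.det_conjTranspose, h2]⟩⟩
    inv_mul_cancel := fun A => Subtype.ext (Matrix.mem_specialUnitaryGroup_iff.mp A.2).1.1 }

/-- The angle of an element of SU(2): `arccos(Re(Tr M)/2) ∈ [0, π]`. -/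
def ang (A : SU2) : ℝ := Real.arccos ((A.val.trace).re / 2)
/-- The diagonal torus of SU(2): matrices `diag(z, z̄)` with `|z| = 1`. -/
def diagTorus : Set (Matrix (Fin 2) (Fin 2) ℂ) :=
  {M | ∃ z : ℂ, ‖z‖ = 1 ∧ M = !![z, 0; 0, starRingEnd ℂ z]}

open Complex in
lemma su2_entries {M : Matrix (Fin 2) (Fin 2) ℂ} (hM : M ∈ SU2) :
    M 1 0 = -(starRingEnd ℂ) (M 0 1) ∧ M 1 1 = (starRingEnd ℂ) (M 0 0) ∧
      M 0 0 * (starRingEnd ℂ) (M 0 0) + M 0 1 * (starRingEnd ℂ) (M 0 1) = 1 := by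
  obtain ⟨hu, hd⟩ := Matrix.mem_specialUnitaryGroup_iff.mp hM
  have hadj : M * M.adjugate = 1 := by rw [Matrix.mul_adjugate, hd, one_smul]
  have h1 : star M * M = 1 := Matrix.mem_unitaryGroup_iff'.mp hu
  have hs : star M = M.adjugate := by
    calc star M = star M * (M * M.adjugate) := by rw [hadj, mul_one]
    _ = (star M * M) * M.adjugate := by rw [mul_assoc]
    _ = M.adjugate := by rw [h1, one_mul]
  rw [Matrix.adjugate_fin_two] at hs
  have e01 : (starRingEnd ℂ) (M 1 0) = -M 0 1 := by
    have := congrFun (congrFun hs 0) 1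
    simpa [Matrix.star_apply] using this
  have e11 : (starRingEnd ℂ) (M 1 1) = M 0 0 := by
    have := congrFun (congrFun hs 1) 1
    simpa [Matrix.star_apply] using this
  have h10 : M 1 0 = -(starRingEnd ℂ) (M 0 1) := by
    have := congrArg (starRingEnd ℂ) e01
    simpa using this
  have h11 : M 1 1 = (starRingEnd ℂ) (M 0 0) := by
    have := congrArg (starRingEnd ℂ) e11
    simpa using this
  refine ⟨h10, h11, ?_⟩
  rw [Matrix.det_fin_two, h10, h11] at hd
  linear_combination hd

lemma mem_su2 (a b : ℂ) (h : a * (starRingEnd ℂ) a + b * (starRingEnd ℂ) b = 1) :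
    !![a, b; -(starRingEnd ℂ) b, (starRingEnd ℂ) a] ∈ SU2 := by
  refine Matrix.mem_specialUnitaryGroup_iff.mpr ⟨Matrix.mem_unitaryGroup_iff.mpr ?_, ?_⟩
  · ext i j
    fin_cases i <;> fin_cases j <;>
      simp [Matrix.mul_apply, Fin.sum_univ_two, Matrix.star_apply, Matrix.one_apply] <;>
      ring_nf <;> linear_combination h
  · rw [Matrix.det_fin_two]
    simp
    linear_combination h

lemma diag_of_su2 {N : Matrix (Fin 2) (Fin 2) ℂ} (hN : N ∈ SU2) (h01 : N 0 1 = 0) :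
    N ∈ diagTorus := by
  obtain ⟨h10, h11, hdet⟩ := su2_entries hN
  refine ⟨N 0 0, ?_, ?_⟩
  · rw [h01] at hdet
    simp [Complex.mul_conj] at hdet
    have h2 : Complex.normSq (N 0 0) = 1 := by exact_mod_cast hdet
    have := congrArg Real.sqrt h2
    simpa [Complex.norm_def] using this
  · ext i j
    fin_cases i <;> fin_cases j <;> simp [h01, h10, h11]

lemma offdiag_zero {N : Matrix (Fin 2) (Fin 2) ℂ} {z : ℂ} (hz : z ≠ (starRingEnd ℂ) z)
    (hc : N * !![z, 0; 0, (starRingEnd ℂ) z] = !![z, 0; 0, (starRingEnd ℂ) z] * N) :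
    N 0 1 = 0 := by
  have h := congrFun (congrFun hc 0) 1
  simp [Matrix.mul_apply, Fin.sum_univ_two] at h
  have h2 : N 0 1 * ((starRingEnd ℂ) z - z) = 0 := by linear_combination h
  rcases mul_eq_zero.mp h2 with h' | h'
  · exact h'
  · exact absurd (by linear_combination -h') hz

lemma mulP_eq (a b z n : ℂ) (hn : n ≠ 0)
    (hdet : a * (starRingEnd ℂ) a + b * (starRingEnd ℂ) b = 1)
    (hz1 : z * (starRingEnd ℂ) z = 1)
    (hz2 : z + (starRingEnd ℂ) z = a + (starRingEnd ℂ) a) :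
    !![a, b; -(starRingEnd ℂ) b, (starRingEnd ℂ) a] *
      !![b / n, ((starRingEnd ℂ) a - (starRingEnd ℂ) z) / n; (z - a) / n, (starRingEnd ℂ) b / n] =
    !![b / n, ((starRingEnd ℂ) a - (starRingEnd ℂ) z) / n; (z - a) / n, (starRingEnd ℂ) b / n] *
      !![z, 0; 0, (starRingEnd ℂ) z] := by
  ext i j
  fin_cases i <;> fin_cases j <;> simp [Matrix.mul_apply, Fin.sum_univ_two] <;> field_simp
  all_goals first
    | linear_combination (hdet - hz1 + z * hz2)
    | linear_combination (hdet - hz1 + (starRingEnd ℂ) z * hz2)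
    | linear_combination (n ^ 2 * (hdet - hz1 + z * hz2))
    | linear_combination (n ^ 2 * (hdet - hz1 + (starRingEnd ℂ) z * hz2))
    | linear_combination -((hdet - hz1 + z * hz2))
    | linear_combination -((hdet - hz1 + (starRingEnd ℂ) z * hz2))
    | linear_combination -(n ^ 2 * (hdet - hz1 + z * hz2))
    | linear_combination -(n ^ 2 * (hdet - hz1 + (starRingEnd ℂ) z * hz2))
    | linear_combination (0 : ℂ) * hdet

open Complex in
lemma diag_su2 {M : Matrix (Fin 2) (Fin 2) ℂ} (hM : M ∈ SU2) (h1 : M ≠ 1) (h2 : M ≠ -1) :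
    ∃ g, g ∈ SU2 ∧ ∃ z : ℂ, z ≠ (starRingEnd ℂ) z ∧
      g * M * star g = !![z, 0; 0, (starRingEnd ℂ) z] := by
  obtain ⟨h10, h11, hdet⟩ := su2_entries hM
  set a := M 0 0 with ha
  set b := M 0 1 with hb0
  have hMform : M = !![a, b; -(starRingEnd ℂ) b, (starRingEnd ℂ) a] := by
    ext i j; fin_cases i <;> fin_cases j <;> simp [h10, h11, ha, hb0]
  by_cases hb : b = 0
  · refine ⟨1, one_mem _, a, ?_, ?_⟩
    · intro hc
      have haa : a * a = 1 := by
        have h := hdet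
        rw [hb, ← hc] at h
        simpa using h
      have hfac : (a - 1) * (a + 1) = 0 := by linear_combination haa
      rcases mul_eq_zero.mp hfac with h' | h'
      · apply h1
        rw [hMform, hb, ← hc, show a = 1 by linear_combination h']
        simp [Matrix.one_fin_two]
      · apply h2
        rw [hMform, hb, ← hc, show a = -1 by linear_combination h']
        ext i j; fin_cases i <;> fin_cases j <;> simp [Matrix.one_fin_two]
    · rw [star_one, one_mul, mul_one, hMform, hb]
      simp
  · -- b ≠ 0
    set t := a.re with ht0
    have hns : normSq a + normSq b = 1 := by
      have h := hdet
      rw [Complex.mul_conj, Complex.mul_conj] at h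
      exact_mod_cast h
    have hbpos : 0 < normSq b := Complex.normSq_pos.mpr hb
    have ht : t ^ 2 < 1 := by
      nlinarith [Complex.normSq_nonneg a, Complex.normSq_apply a, sq_nonneg a.im]
    set s := Real.sqrt (1 - t ^ 2) with hs0
    have hs : 0 < s := Real.sqrt_pos.mpr (by linarith)
    have hs2 : s ^ 2 = 1 - t ^ 2 := Real.sq_sqrt (by linarith)
    set z : ℂ := ⟨t, s⟩ with hzdef
    have hzre : z.re = t := rfl
    have hzim : z.im = s := rfl
    have hz : z ≠ (starRingEnd ℂ) z := by
      intro hc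
      have := congrArg Complex.im hc
      rw [Complex.conj_im, hzim] at this
      linarith
    have hz1 : z * (starRingEnd ℂ) z = 1 := by
      rw [Complex.mul_conj,
        show Complex.normSq z = t ^ 2 + s ^ 2 by simp [Complex.normSq_apply, hzre, hzim]; ring,
        hs2]
      norm_num
    have hz2 : z + (starRingEnd ℂ) z = a + (starRingEnd ℂ) a := by
      rw [Complex.add_conj, Complex.add_conj, hzre]
    set n := Real.sqrt (normSq b + normSq (z - a)) with hn0
    have hn : 0 < n :=
      Real.sqrt_pos.mpr (by nlinarith [Complex.normSq_nonneg (z - a)])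
    have hnC : (n : ℂ) ≠ 0 := by exact_mod_cast hn.ne'
    set P : Matrix (Fin 2) (Fin 2) ℂ :=
      !![b / n, ((starRingEnd ℂ) a - (starRingEnd ℂ) z) / n;
         (z - a) / n, (starRingEnd ℂ) b / n] with hPdef
    have hn2 : (n : ℂ) * n = b * (starRingEnd ℂ) b
        + (z - a) * ((starRingEnd ℂ) z - (starRingEnd ℂ) a) := by
      have hr : (n : ℝ) * n = normSq b + normSq (z - a) := by
        rw [hn0]
        exact Real.mul_self_sqrt (by nlinarith [Complex.normSq_nonneg (z - a)])
      calc ((n : ℂ)) * n = ((n * n : ℝ) : ℂ) := by push_cast; ring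
      _ = ((normSq b + normSq (z - a) : ℝ) : ℂ) := by rw [hr]
      _ = b * (starRingEnd ℂ) b + (z - a) * ((starRingEnd ℂ) z - (starRingEnd ℂ) a) := by
          push_cast
          rw [← Complex.mul_conj, ← Complex.mul_conj, map_sub]
    have hP : P ∈ SU2 := by
      have hmem := mem_su2 (b / n) (((starRingEnd ℂ) a - (starRingEnd ℂ) z) / n) ?_
      · convert hmem using 2
        ext i j; fin_cases i <;> fin_cases j <;>
          simp [hPdef, map_div₀, Complex.conj_ofReal] <;> ring
      · simp only [map_div₀, map_sub, Complex.conj_ofReal, Complex.conj_conj]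
        field_simp
        first
        | linear_combination hn2
        | linear_combination (-1 : ℂ) * hn2
        | linear_combination (2 : ℂ) * hn2
        | linear_combination (-2 : ℂ) * hn2
    refine ⟨star P, ?_, z, hz, ?_⟩
    · exact Matrix.mem_specialUnitaryGroup_iff.mpr
        ⟨Unitary.star_mem (Matrix.mem_specialUnitaryGroup_iff.mp hP).1, by
          have hd := (Matrix.mem_specialUnitaryGroup_iff.mp hP).2
          simp [Matrix.star_eq_conjTranspose, Matrix.det_conjTranspose, hd]⟩
    · have hPu : star P * P = 1 :=
        Matrix.mem_unitaryGroup_iff'.mp (Matrix.mem_specialUnitaryGroup_iff.mp hP).1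
      have key : M * P = P * !![z, 0; 0, (starRingEnd ℂ) z] := by
        rw [hMform, hPdef]
        exact mulP_eq a b z n hnC hdet hz1 hz2
      calc star P * M * star (star P) = star P * (M * P) := by rw [star_star, mul_assoc]
      _ = star P * (P * !![z, 0; 0, (starRingEnd ℂ) z]) := by rw [key]
      _ = (star P * P) * !![z, 0; 0, (starRingEnd ℂ) z] := by rw [← mul_assoc]
      _ = !![z, 0; 0, (starRingEnd ℂ) z] := by rw [hPu, one_mul]

/-- A representation with abelian image can be conjugated into the diagonal torus. -/
theorem stmt10 {Γ : Type*} [Group Γ] (ρ : Γ →* SU2)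
    (hab : ∀ γ δ : Γ, ρ γ * ρ δ = ρ δ * ρ γ) :
    ∃ g : SU2, ∀ γ : Γ, ((g * ρ γ * g⁻¹ : SU2) : Matrix (Fin 2) (Fin 2) ℂ) ∈ diagTorus := by
  by_cases hall : ∀ γ : Γ, ((ρ γ : Matrix (Fin 2) (Fin 2) ℂ) = 1 ∨
      (ρ γ : Matrix (Fin 2) (Fin 2) ℂ) = -1)
  · refine ⟨1, fun γ => ?_⟩
    rw [one_mul, inv_one, mul_one]
    rcases hall γ with h | h
    · exact ⟨1, by simp, by rw [h]; ext i j; fin_cases i <;> fin_cases j <;> simp⟩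
    · exact ⟨-1, by simp, by rw [h]; ext i j; fin_cases i <;> fin_cases j <;> simp⟩
  · push_neg at hall
    obtain ⟨γ₀, hγ1, hγ2⟩ := hall
    obtain ⟨g', hg', z, hz, hgz⟩ := diag_su2 (ρ γ₀).2 hγ1 hγ2
    refine ⟨⟨g', hg'⟩, fun γ => ?_⟩
    have hval : ((⟨g', hg'⟩ * ρ γ * (⟨g', hg'⟩ : SU2)⁻¹ : SU2) : Matrix (Fin 2) (Fin 2) ℂ)
        = g' * (ρ γ : Matrix (Fin 2) (Fin 2) ℂ) * star g' := rfl
    rw [hval]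
    have hsg : star g' * g' = 1 :=
      Matrix.mem_unitaryGroup_iff'.mp (Matrix.mem_specialUnitaryGroup_iff.mp hg').1
    have hmul : ((ρ γ * ρ γ₀ : SU2) : Matrix (Fin 2) (Fin 2) ℂ)
        = ((ρ γ₀ * ρ γ : SU2) : Matrix (Fin 2) (Fin 2) ℂ) := by rw [hab γ γ₀]
    have hcomm : (g' * (ρ γ : Matrix (Fin 2) (Fin 2) ℂ) * star g') *
        !![z, 0; 0, (starRingEnd ℂ) z] =
        !![z, 0; 0, (starRingEnd ℂ) z] * (g' * (ρ γ : Matrix (Fin 2) (Fin 2) ℂ) * star g') := by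
      rw [← hgz]
      have lhs : (g' * (ρ γ : Matrix (Fin 2) (Fin 2) ℂ) * star g') *
          (g' * (ρ γ₀ : Matrix (Fin 2) (Fin 2) ℂ) * star g')
          = g' * (((ρ γ : Matrix (Fin 2) (Fin 2) ℂ)) * ((ρ γ₀ : Matrix (Fin 2) (Fin 2) ℂ))) * star g' := by
        rw [show (g' * (ρ γ : Matrix (Fin 2) (Fin 2) ℂ) * star g') *
            (g' * (ρ γ₀ : Matrix (Fin 2) (Fin 2) ℂ) * star g')
            = g' * ((ρ γ : Matrix (Fin 2) (Fin 2) ℂ) * ((star g' * g') *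
              (ρ γ₀ : Matrix (Fin 2) (Fin 2) ℂ))) * star g' by noncomm_ring, hsg, one_mul]
      have rhs : (g' * (ρ γ₀ : Matrix (Fin 2) (Fin 2) ℂ) * star g') *
          (g' * (ρ γ : Matrix (Fin 2) (Fin 2) ℂ) * star g')
          = g' * (((ρ γ₀ : Matrix (Fin 2) (Fin 2) ℂ)) * ((ρ γ : Matrix (Fin 2) (Fin 2) ℂ))) * star g' := by
        rw [show (g' * (ρ γ₀ : Matrix (Fin 2) (Fin 2) ℂ) * star g') *
            (g' * (ρ γ : Matrix (Fin 2) (Fin 2) ℂ) * star g')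
            = g' * ((ρ γ₀ : Matrix (Fin 2) (Fin 2) ℂ) * ((star g' * g') *
              (ρ γ : Matrix (Fin 2) (Fin 2) ℂ))) * star g' by noncomm_ring, hsg, one_mul]
      have hmul' : (ρ γ : Matrix (Fin 2) (Fin 2) ℂ) * (ρ γ₀ : Matrix (Fin 2) (Fin 2) ℂ)
          = (ρ γ₀ : Matrix (Fin 2) (Fin 2) ℂ) * (ρ γ : Matrix (Fin 2) (Fin 2) ℂ) :=
        congrArg Subtype.val (hab γ γ₀)
      rw [lhs, rhs, hmul']
    have hNmem : g' * (ρ γ : Matrix (Fin 2) (Fin 2) ℂ) * star g' ∈ SU2 := by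
      have hstar : star g' ∈ SU2 := ((⟨g', hg'⟩ : SU2)⁻¹).2
      exact mul_mem (mul_mem hg' (ρ γ).2) hstar
    exact diag_of_su2 hNmem (offdiag_zero hz hcomm)

end
end

section
/- Consider the set C = {(A,B) ∈ SU(2)² : AB = BA} of pairs of commuting elements of SU(2), with the equivalence relation of simultaneous conjugation, and consider (ℝ/2πℤ)² with the equivalence relation identifying (φ,ψ) with (−φ,−ψ). The map sending (φ,ψ) to the commuting pair (diag(e^{iφ}, e^{−iφ}), diag(e^{iψ}, e^{−iψ})) descends to a homeomorphism from the quotient of (ℝ/2πℤ)² by the involution (φ,ψ) ↦ (−φ,−ψ) onto the quotient of C by simultaneous conjugation (both quotients carrying the quotient topology). -/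
open Matrix

noncomputable section

theorem diag_mem (φ : ℝ) :
    !![Complex.exp (φ * Complex.I), 0; 0, Complex.exp (-(φ * Complex.I))] ∈ SU2 := by
  rw [Matrix.mem_specialUnitaryGroup_iff]
  constructor
  · rw [Matrix.mem_unitaryGroup_iff]
    have hstar : star !![Complex.exp (φ * Complex.I), 0; 0, Complex.exp (-(φ * Complex.I))] =
        !![Complex.exp (-(φ * Complex.I)), 0; 0, Complex.exp (φ * Complex.I)] := by
      rw [Matrix.star_eq_conjTranspose]
      ext i j
      fin_cases i <;> fin_cases j <;>
        simp [Matrix.conjTranspose_apply, ← Complex.exp_conj, _root_.map_mul, Complex.conj_I,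
          Complex.conj_ofReal]
    rw [hstar, Matrix.mul_fin_two]
    simp [← Complex.exp_add]
    exact Matrix.one_fin_two.symm
  · rw [Matrix.det_fin_two_of]
    simp [← Complex.exp_add]

/-- The diagonal element `diag(e^{iφ}, e^{−iφ})` of SU(2). -/
def diagSU (φ : ℝ) : SU2 := ⟨_, diag_mem φ⟩

theorem diagSU_comm (φ ψ : ℝ) : diagSU φ * diagSU ψ = diagSU ψ * diagSU φ := by
  apply Subtype.ext
  show (diagSU φ).val * (diagSU ψ).val = (diagSU ψ).val * (diagSU φ).val
  simp only [diagSU, Matrix.mul_fin_two]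
  ext i j
  fin_cases i <;> fin_cases j <;> simp <;> ring

/-- Pairs of commuting elements of SU(2). -/
def CommPairs : Type := {p : SU2 × SU2 // p.1 * p.2 = p.2 * p.1}

instance : TopologicalSpace CommPairs :=
  inferInstanceAs (TopologicalSpace {p : SU2 × SU2 // p.1 * p.2 = p.2 * p.1})

/-- Simultaneous conjugation on commuting pairs. -/
def commSetoid : Setoid CommPairs where
  r p q := ∃ g : SU2, q.val.1 = g * p.val.1 * g⁻¹ ∧ q.val.2 = g * p.val.2 * g⁻¹
  iseqv := by
    constructor
    · intro p; exact ⟨1, by simp, by simp⟩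
    · rintro p q ⟨g, h1, h2⟩
      refine ⟨g⁻¹, ?_, ?_⟩ <;> simp [h1, h2, mul_assoc]
    · rintro p q r ⟨g, h1, h2⟩ ⟨g', h1', h2'⟩
      refine ⟨g' * g, ?_, ?_⟩ <;> simp [h1, h2, h1', h2', mul_assoc]

/-- The relation identifying `(φ, ψ)` with `(−φ, −ψ)` on the torus `(ℝ/2πℤ)²`. -/
def negSetoid : Setoid (AddCircle (2 * Real.pi) × AddCircle (2 * Real.pi)) where
  r x y := y = x ∨ y = -x
  iseqv := by
    constructor
    · intro x; exact Or.inl rfl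
    · rintro x y (rfl | rfl)
      · exact Or.inl rfl
      · exact Or.inr (neg_neg x).symm
    · rintro x y z (rfl | rfl) (rfl | rfl) <;> simp

theorem conj_exp_ofReal_mul_I (θ : ℝ) : starRingEnd ℂ (Complex.exp (θ * Complex.I)) =
    Complex.exp (-(θ * Complex.I)) := by
  rw [← Complex.exp_conj, _root_.map_mul, Complex.conj_I, Complex.conj_ofReal]
  ring_nf

open Complex in
theorem entries_eq (A : Matrix (Fin 2) (Fin 2) ℂ) : A = !![A 0 0, A 0 1; A 1 0, A 1 1] := by
  ext i j; fin_cases i <;> fin_cases j <;> rfl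

theorem lit_eq {a b c d a' b' c' d' : ℂ} (h1 : a = a') (h2 : b = b') (h3 : c = c') (h4 : d = d') :
    !![a,b;c,d] = !![a',b';c',d'] := by rw [h1,h2,h3,h4]

theorem su2_lit {a b c d : ℂ} (h : !![a,b;c,d] ∈ SU2) :
    d = starRingEnd ℂ a ∧ c = - starRingEnd ℂ b ∧ a * starRingEnd ℂ a + b * starRingEnd ℂ b = 1 := by
  obtain ⟨hu, hdet⟩ := Matrix.mem_specialUnitaryGroup_iff.mp h
  rw [Matrix.mem_unitaryGroup_iff'] at hu
  rw [Matrix.det_fin_two_of] at hdet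
  have hmul : !![a,b;c,d] * !![d,-b;-c,a] = 1 := by
    rw [Matrix.mul_fin_two, Matrix.one_fin_two]
    exact lit_eq (by linear_combination hdet) (by ring) (by ring) (by linear_combination hdet)
  have hstar : star !![a,b;c,d] = !![d,-b;-c,a] := by
    calc star !![a,b;c,d] = star !![a,b;c,d] * (!![a,b;c,d] * !![d,-b;-c,a]) := by
          rw [hmul, mul_one]
    _ = (star !![a,b;c,d] * !![a,b;c,d]) * !![d,-b;-c,a] := by rw [mul_assoc]
    _ = !![d,-b;-c,a] := by rw [hu, one_mul]
  have hs2 : star !![a,b;c,d] =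
      !![starRingEnd ℂ a, starRingEnd ℂ c; starRingEnd ℂ b, starRingEnd ℂ d] := by
    rw [Matrix.star_eq_conjTranspose]
    ext i j; fin_cases i <;> fin_cases j <;> simp [Matrix.conjTranspose_apply]
  rw [hs2] at hstar
  have e00 : starRingEnd ℂ a = d := congrFun (congrFun hstar 0) 0
  have e10 : starRingEnd ℂ b = -c := congrFun (congrFun hstar 1) 0
  exact ⟨e00.symm, by linear_combination e10, by linear_combination hdet + a * e00 + b * e10⟩

theorem mem_su2_of {a b : ℂ} (h : a * starRingEnd ℂ a + b * starRingEnd ℂ b = 1) :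
    !![a, b; -starRingEnd ℂ b, starRingEnd ℂ a] ∈ SU2 := by
  rw [Matrix.mem_specialUnitaryGroup_iff]
  constructor
  · rw [Matrix.mem_unitaryGroup_iff']
    have hs : star !![a, b; -starRingEnd ℂ b, starRingEnd ℂ a] =
        !![starRingEnd ℂ a, -b; starRingEnd ℂ b, a] := by
      rw [Matrix.star_eq_conjTranspose]
      ext i j; fin_cases i <;> fin_cases j <;> simp [Matrix.conjTranspose_apply]
    rw [hs, Matrix.mul_fin_two, Matrix.one_fin_two]
    exact lit_eq (by linear_combination h) (by ring) (by ring) (by linear_combination h)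
  · rw [Matrix.det_fin_two_of]; linear_combination h

theorem diagSU_val (φ : ℝ) : (diagSU φ).val =
    !![Complex.exp (φ * Complex.I), 0; 0, Complex.exp (-(φ * Complex.I))] := rfl

/-- Any element of SU(2) with vanishing upper-right entry is `diagSU ψ` for some `ψ`. -/
theorem diag_case {a c d : ℂ} (h : !![a,(0:ℂ);c,d] ∈ SU2) : ∃ ψ : ℝ, !![a,(0:ℂ);c,d] = (diagSU ψ).val := by
  obtain ⟨h1, h2, h3⟩ := su2_lit h
  simp only [map_zero, neg_zero, mul_zero, add_zero] at h2 h3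
  have hconj := conj_exp_ofReal_mul_I
  set θ := a.arg with hθ
  refine ⟨θ, ?_⟩
  have habs : ‖a‖ = 1 := by
    have hn : Complex.normSq a = 1 := by
      have := h3; rw [Complex.mul_conj] at this; exact_mod_cast this
    have h5 : (‖a‖ - 1) * (‖a‖ + 1) = 0 := by
      nlinarith [Complex.sq_norm a]
    rcases mul_eq_zero.mp h5 with h6 | h6
    · linarith
    · nlinarith [norm_nonneg a]
  have ha : Complex.exp (θ * Complex.I) = a := by
    conv_rhs => rw [← Complex.norm_mul_exp_arg_mul_I a]
    rw [habs, ← hθ]; simp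
  rw [diagSU_val]
  refine lit_eq ha.symm rfl h2 ?_
  rw [h1, ← ha]
  exact hconj θ

open Complex in
theorem exists_conj_diag (A : SU2) : ∃ g : SU2, ∃ ψ : ℝ, g * A * g⁻¹ = diagSU ψ := by
  have h0 := entries_eq A.val
  set a := A.val 0 0 with ha0
  set b := A.val 0 1 with hb0
  have hmem : !![a, b; A.val 1 0, A.val 1 1] ∈ SU2 := h0 ▸ A.2
  obtain ⟨h1, h2, h3⟩ := su2_lit hmem
  have hA2 : A.val = !![a, b; -starRingEnd ℂ b, starRingEnd ℂ a] := by rw [h0, h2, h1]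
  by_cases hb : b = 0
  · rw [hb] at hA2
    obtain ⟨ψ, hψ⟩ := diag_case (hA2 ▸ A.2)
    refine ⟨1, ψ, ?_⟩
    simp only [one_mul, inv_one, mul_one]
    exact Subtype.ext (hA2.trans hψ)
  · set x := a.re with hx0
    set y := a.im with hy0
    have hxy : a = (x:ℂ) + (y:ℂ)*Complex.I := (Complex.re_add_im a).symm
    have hca : starRingEnd ℂ a = (x:ℂ) - (y:ℂ)*Complex.I := by
      rw [hxy, map_add, _root_.map_mul, Complex.conj_I, Complex.conj_ofReal, Complex.conj_ofReal]
      ring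
    have hnc : (x:ℂ)^2 + (y:ℂ)^2 + b * starRingEnd ℂ b = 1 := by
      linear_combination h3 - (starRingEnd ℂ a) * hxy - ((x:ℂ) + (y:ℂ)*Complex.I) * hca
        + (y:ℂ)^2 * Complex.I_sq
    have hr : x^2 + y^2 + Complex.normSq b = 1 := by
      have := hnc; rw [Complex.mul_conj] at this; exact_mod_cast this
    have hbpos : 0 < Complex.normSq b := Complex.normSq_pos.mpr hb
    have hx1 : -1 ≤ x := by nlinarith [sq_nonneg y]
    have hx2 : x ≤ 1 := by nlinarith [sq_nonneg y]
    set ψ := Real.arccos x with hψ0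
    have hcos : Real.cos ψ = x := Real.cos_arccos hx1 hx2
    set s := Real.sin ψ with hs0
    have hs2 : s^2 + x^2 = 1 := by rw [← hcos]; exact Real.sin_sq_add_cos_sq ψ
    have hs2c : (s:ℂ)^2 + (x:ℂ)^2 = 1 := by exact_mod_cast hs2
    have hlam : Complex.exp (ψ*Complex.I) = (x:ℂ) + (s:ℂ)*Complex.I := by
      rw [Complex.exp_mul_I, ← Complex.ofReal_cos, ← Complex.ofReal_sin, hcos]
    have hlam' : Complex.exp (-(ψ*Complex.I)) = (x:ℂ) - (s:ℂ)*Complex.I := by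
      rw [← conj_exp_ofReal_mul_I, hlam, map_add, _root_.map_mul, Complex.conj_I,
        Complex.conj_ofReal, Complex.conj_ofReal]
      ring
    set t := s - y with ht0
    have htc : (t:ℂ) = (s:ℂ) - (y:ℂ) := by push_cast [ht0]; ring
    have hn2pos : 0 < Complex.normSq b + t^2 := by positivity
    set n := Real.sqrt (Complex.normSq b + t^2) with hn0
    have hnpos : 0 < n := Real.sqrt_pos.mpr hn2pos
    have hn2 : n^2 = Complex.normSq b + t^2 := Real.sq_sqrt hn2pos.le
    set N : ℂ := ((n : ℝ) : ℂ) with hN0'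
    have hN0 : N ≠ 0 := Complex.ofReal_ne_zero.mpr hnpos.ne'
    have hn2c : N^2 = b * starRingEnd ℂ b + (t:ℂ)^2 := by
      rw [hN0', Complex.mul_conj]
      exact_mod_cast hn2
    set p : ℂ := b / N with hp0
    set q : ℂ := ((t:ℂ) * Complex.I) / N with hq0
    have hcq : starRingEnd ℂ q = -q := by
      rw [hq0, map_div₀, _root_.map_mul, Complex.conj_I, Complex.conj_ofReal, Complex.conj_ofReal]
      ring
    have hcp : starRingEnd ℂ p = starRingEnd ℂ b / N := by
      rw [hp0, map_div₀, Complex.conj_ofReal]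
    have hUmem : !![p, q; -starRingEnd ℂ q, starRingEnd ℂ p] ∈ SU2 := by
      apply mem_su2_of
      rw [hcq, hcp, hp0, hq0]
      field_simp
      linear_combination -hn2c - ((t:ℂ)^2) * Complex.I_sq
    set U : Matrix (Fin 2) (Fin 2) ℂ := !![p, q; -starRingEnd ℂ q, starRingEnd ℂ p] with hU0
    have hU : U = !![p, q; q, starRingEnd ℂ b / N] := by
      rw [hU0, hcq, hcp, neg_neg]
    have hAU : A.val * U = U * (diagSU ψ).val := by
      rw [hA2, hU, diagSU_val, Matrix.mul_fin_two, Matrix.mul_fin_two]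
      refine lit_eq ?_ ?_ ?_ ?_
      · rw [hp0, hq0, hxy, hlam]; field_simp
        linear_combination (Complex.I*b) * htc
      · rw [hp0, hq0, hxy, hlam']; field_simp
        linear_combination ((t:ℂ)*((y:ℂ)+s)) * Complex.I_sq - ((y:ℂ)+s) * htc - hs2c + hnc
      · rw [hp0, hq0, hca, hlam]; field_simp
        linear_combination -(((t:ℂ)*((y:ℂ)+s)) * Complex.I_sq - ((y:ℂ)+s) * htc - hs2c + hnc)
      · rw [hq0, hca, hlam']; field_simp
        linear_combination (-(starRingEnd ℂ b) * Complex.I) * htc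
    let u : SU2 := ⟨U, hUmem⟩
    refine ⟨u⁻¹, ψ, ?_⟩
    apply Subtype.ext
    have hval : ((u⁻¹ * A * (u⁻¹)⁻¹ : SU2) : Matrix (Fin 2) (Fin 2) ℂ) = star U * A.val * U := by
      rw [inv_inv]; rfl
    rw [hval, mul_assoc, hAU, ← mul_assoc]
    have hUU : star U * U = 1 :=
      Matrix.mem_unitaryGroup_iff'.mp (Matrix.mem_specialUnitaryGroup_iff.mp hUmem).1
    rw [hUU, one_mul]

theorem su2_coe_mul (g h : SU2) : (g * h : SU2).val = g.val * h.val := rfl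

theorem su2_inv_val (g : SU2) : (g⁻¹ : SU2).val = star g.val := rfl

theorem su2_mul_inv_val (g : SU2) : g.val * (g⁻¹ : SU2).val = 1 := by
  have := congrArg Subtype.val (mul_inv_cancel g)
  rwa [su2_coe_mul] at this

theorem comm_with_diag {φ : ℝ} (hφ : Complex.exp (φ * Complex.I) ≠ Complex.exp (-(φ * Complex.I)))
    {B : SU2} (hc : diagSU φ * B = B * diagSU φ) : ∃ ψ, B = diagSU ψ := by
  have hv : (diagSU φ).val * B.val = B.val * (diagSU φ).val := by
    have := congrArg Subtype.val hc
    rwa [su2_coe_mul, su2_coe_mul] at this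
  have h0 := entries_eq B.val
  rw [h0, diagSU_val, Matrix.mul_fin_two, Matrix.mul_fin_two] at hv
  have e01 := congrFun (congrFun hv 0) 1
  simp only [Matrix.cons_val', Matrix.cons_val_zero, Matrix.cons_val_one, Matrix.head_cons,
    Matrix.head_fin_const, Matrix.empty_val', Matrix.cons_val_fin_one, Matrix.of_apply] at e01
  simp at e01
  have hq : B.val 0 1 = 0 := by
    have hz : B.val 0 1 * (Complex.exp (φ * Complex.I) - Complex.exp (-(φ * Complex.I))) = 0 := by
      linear_combination e01
    rcases mul_eq_zero.mp hz with h | h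
    · exact h
    · exact absurd (sub_eq_zero.mp h) hφ
  rw [hq] at h0
  obtain ⟨ψ, hψ⟩ := diag_case (h0 ▸ B.2)
  exact ⟨ψ, Subtype.ext (h0.trans hψ)⟩

theorem diag_central {φ : ℝ} (hφ : Complex.exp (φ * Complex.I) = Complex.exp (-(φ * Complex.I)))
    (g : SU2) : g * diagSU φ * g⁻¹ = diagSU φ := by
  have hscal : (diagSU φ).val = Complex.exp (φ * Complex.I) • (1 : Matrix (Fin 2) (Fin 2) ℂ) := by
    rw [diagSU_val, ← hφ]
    ext i j; fin_cases i <;> fin_cases j <;> simp [Matrix.one_apply]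
  apply Subtype.ext
  rw [su2_coe_mul, su2_coe_mul, hscal, Matrix.mul_smul, Matrix.smul_mul, mul_one,
    su2_mul_inv_val]

theorem weyl_mem : !![(0:ℂ), 1; -1, 0] ∈ SU2 := by
  have h := mem_su2_of (a := (0:ℂ)) (b := 1) (by simp)
  simpa using h

theorem weyl_conj (φ : ℝ) :
    (⟨_, weyl_mem⟩ : SU2) * diagSU φ * (⟨_, weyl_mem⟩ : SU2)⁻¹ = diagSU (-φ) := by
  apply Subtype.ext
  rw [su2_coe_mul, su2_coe_mul, su2_inv_val]
  have hstar : star !![(0:ℂ), 1; -1, 0] = !![(0:ℂ), -1; 1, 0] := by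
    rw [Matrix.star_eq_conjTranspose]
    ext i j; fin_cases i <;> fin_cases j <;> simp [Matrix.conjTranspose_apply]
  have E1 : Complex.exp (((-φ : ℝ) : ℂ) * Complex.I) = Complex.exp (-(↑φ * Complex.I)) := by
    rw [show ((-φ : ℝ) : ℂ) * Complex.I = -(↑φ * Complex.I) by push_cast; ring]
  have E2 : Complex.exp (-(((-φ : ℝ) : ℂ) * Complex.I)) = Complex.exp (↑φ * Complex.I) := by
    rw [show -(((-φ : ℝ) : ℂ) * Complex.I) = ↑φ * Complex.I by push_cast; ring]
  rw [hstar, diagSU_val, diagSU_val, E1, E2, Matrix.mul_fin_two, Matrix.mul_fin_two]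
  exact lit_eq (by ring) (by ring) (by ring) (by ring)

theorem diagSU_add (φ ψ : ℝ) : diagSU (φ + ψ) = diagSU φ * diagSU ψ := by
  apply Subtype.ext
  rw [su2_coe_mul, diagSU_val, diagSU_val, diagSU_val, Matrix.mul_fin_two]
  have h1 : ((φ + ψ : ℝ) : ℂ) * Complex.I = φ * Complex.I + ψ * Complex.I := by push_cast [zsmul_eq_mul]; ring
  refine lit_eq ?_ (by ring) (by ring) ?_
  · rw [h1, Complex.exp_add]; ring
  · rw [h1, neg_add, Complex.exp_add]; ring

theorem diagSU_period (φ : ℝ) (k : ℤ) : diagSU (φ + k • (2 * Real.pi)) = diagSU φ := by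
  have hk : ∀ m : ℤ, Complex.exp ((m : ℂ) * (2 * (Real.pi:ℂ)) * Complex.I) = 1 := by
    intro m
    rw [show ((m:ℂ) * (2 * (Real.pi:ℂ)) * Complex.I) = m * (2 * (Real.pi:ℂ) * Complex.I) by ring]
    exact Complex.exp_int_mul_two_pi_mul_I m
  apply Subtype.ext
  rw [diagSU_val, diagSU_val]
  have h1 : ((φ + k • (2 * Real.pi) : ℝ) : ℂ) * Complex.I =
      φ * Complex.I + k * (2 * (Real.pi:ℂ)) * Complex.I := by push_cast [zsmul_eq_mul]; ring
  refine lit_eq ?_ rfl rfl ?_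
  · rw [h1, Complex.exp_add, hk, mul_one]
  · rw [h1, neg_add, Complex.exp_add,
      show -((k:ℂ) * (2 * (Real.pi:ℂ)) * Complex.I) =
        ((-k : ℤ):ℂ) * (2*(Real.pi:ℂ)) * Complex.I by push_cast; ring, hk, mul_one]

theorem trace_conj (g A : SU2) : (g * A * g⁻¹ : SU2).val.trace = A.val.trace := by
  rw [su2_coe_mul, su2_coe_mul, Matrix.trace_mul_comm, ← mul_assoc]
  have h : (g⁻¹ : SU2).val * g.val = 1 := by
    have := congrArg Subtype.val (inv_mul_cancel g)
    rwa [su2_coe_mul] at this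
  rw [h, one_mul]

theorem diag_trace_re (φ : ℝ) : ((diagSU φ).val.trace).re = 2 * Real.cos φ := by
  rw [diagSU_val, Matrix.trace_fin_two_of, Complex.add_re,
    show -((φ:ℂ) * Complex.I) = ((-φ : ℝ):ℂ) * Complex.I by push_cast; ring,
    Complex.exp_ofReal_mul_I_re, Complex.exp_ofReal_mul_I_re, Real.cos_neg]
  ring

theorem surj_pairs (p : CommPairs) :
    ∃ φ ψ : ℝ, ∃ g : SU2, p.val.1 = g * diagSU φ * g⁻¹ ∧ p.val.2 = g * diagSU ψ * g⁻¹ := by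
  obtain ⟨g, φ, hg⟩ := exists_conj_diag p.val.1
  by_cases hφ : Complex.exp (φ * Complex.I) = Complex.exp (-(φ * Complex.I))
  · obtain ⟨g', ψ, hg'⟩ := exists_conj_diag p.val.2
    have hA : p.val.1 = diagSU φ := by
      have h2 := diag_central hφ g⁻¹
      rw [inv_inv] at h2
      have h3 : p.val.1 = g⁻¹ * diagSU φ * g := by rw [← hg]; group
      rw [h3, h2]
    refine ⟨φ, ψ, g'⁻¹, ?_, ?_⟩
    · rw [diag_central hφ g'⁻¹]; exact hA
    · rw [← hg']; group
  · have hcomm : diagSU φ * (g * p.val.2 * g⁻¹) = (g * p.val.2 * g⁻¹) * diagSU φ := by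
      have e1 : diagSU φ * (g * p.val.2 * g⁻¹) = g * (p.val.1 * p.val.2) * g⁻¹ := by
        rw [← hg]; group
      have e2 : (g * p.val.2 * g⁻¹) * diagSU φ = g * (p.val.2 * p.val.1) * g⁻¹ := by
        rw [← hg]; group
      rw [e1, e2, p.2]
    obtain ⟨ψ, hψ⟩ := comm_with_diag hφ hcomm
    refine ⟨φ, ψ, g⁻¹, ?_, ?_⟩
    · rw [← hg]; group
    · rw [← hψ]; group

theorem coe_eq_coe {x y : ℝ} (k : ℤ) (h : y - x = k * (2 * Real.pi)) :
    (y : AddCircle (2 * Real.pi)) = (x : AddCircle (2 * Real.pi)) := by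
  rw [QuotientAddGroup.eq_iff_sub_mem]
  exact AddSubgroup.mem_zmultiples_iff.mpr ⟨k, by rw [zsmul_eq_mul]; exact h.symm⟩

theorem neg_coe (x : ℝ) : ((-x : ℝ) : AddCircle (2 * Real.pi)) = -(x : AddCircle (2 * Real.pi)) :=
  rfl

theorem self_neg_circle {x : ℝ} (h : Real.sin x = 0) :
    (x : AddCircle (2 * Real.pi)) = -(x : AddCircle (2 * Real.pi)) := by
  obtain ⟨n, hn⟩ := Real.sin_eq_zero_iff.mp h
  rw [← neg_coe]
  exact coe_eq_coe n (by rw [← hn]; ring)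

theorem torus_inj {φ ψ φ' ψ' : ℝ} (h1 : Real.cos φ = Real.cos φ')
    (h2 : Real.cos ψ = Real.cos ψ') (h3 : Real.cos (φ + ψ) = Real.cos (φ' + ψ')) :
    (((φ' : AddCircle (2 * Real.pi)), (ψ' : AddCircle (2 * Real.pi))) :
        AddCircle (2 * Real.pi) × AddCircle (2 * Real.pi)) = (↑φ, ↑ψ) ∨
      (((φ' : AddCircle (2 * Real.pi)), (ψ' : AddCircle (2 * Real.pi))) :
        AddCircle (2 * Real.pi) × AddCircle (2 * Real.pi)) = -(↑φ, ↑ψ) := by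
  have hneg : (-((↑φ, ↑ψ) : AddCircle (2 * Real.pi) × AddCircle (2 * Real.pi))) =
      (((-φ : ℝ) : AddCircle (2 * Real.pi)), ((-ψ : ℝ) : AddCircle (2 * Real.pi))) := rfl
  obtain ⟨k, hk | hk⟩ := Real.cos_eq_cos_iff.mp h1 <;>
    obtain ⟨m, hm | hm⟩ := Real.cos_eq_cos_iff.mp h2
  · exact Or.inl (Prod.ext (coe_eq_coe k (by rw [hk]; ring)) (coe_eq_coe m (by rw [hm]; ring)))
  · -- φ' ≡ φ, ψ' ≡ -ψ
    have hc : Real.cos (φ' + ψ') = Real.cos (φ - ψ) := by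
      rw [show φ' + ψ' = (φ - ψ) + (k + m) * (2 * Real.pi) by rw [hk, hm]; ring]
      exact_mod_cast Real.cos_add_int_mul_two_pi (φ - ψ) (k + m)
    have hss : Real.sin φ * Real.sin ψ = 0 := by
      have e1 := Real.cos_add φ ψ
      have e2 := Real.cos_sub φ ψ
      rw [hc] at h3
      linarith
    rcases mul_eq_zero.mp hss with hz | hz
    · refine Or.inr ?_
      rw [hneg]
      refine Prod.ext ?_ (coe_eq_coe m (by rw [hm]; ring))
      calc (φ' : AddCircle (2 * Real.pi)) = (φ : AddCircle (2 * Real.pi)) :=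
            coe_eq_coe k (by rw [hk]; ring)
      _ = _ := by rw [self_neg_circle hz]; rfl
    · refine Or.inl ?_
      refine Prod.ext (coe_eq_coe k (by rw [hk]; ring)) ?_
      calc (ψ' : AddCircle (2 * Real.pi)) = ((-ψ : ℝ) : AddCircle (2 * Real.pi)) :=
            coe_eq_coe m (by rw [hm]; ring)
      _ = _ := by rw [neg_coe, ← self_neg_circle hz]
  · -- φ' ≡ -φ, ψ' ≡ ψ
    have hc : Real.cos (φ' + ψ') = Real.cos (φ - ψ) := by
      rw [show φ' + ψ' = -(φ - ψ) + (k + m) * (2 * Real.pi) by rw [hk, hm]; ring,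
        show (((k : ℝ) + m) * (2 * Real.pi)) = ((k + m : ℤ) : ℝ) * (2 * Real.pi) by push_cast; ring,
        Real.cos_add_int_mul_two_pi, Real.cos_neg]
    have hss : Real.sin φ * Real.sin ψ = 0 := by
      have e1 := Real.cos_add φ ψ
      have e2 := Real.cos_sub φ ψ
      rw [hc] at h3
      linarith
    rcases mul_eq_zero.mp hss with hz | hz
    · refine Or.inl ?_
      refine Prod.ext ?_ (coe_eq_coe m (by rw [hm]; ring))
      calc (φ' : AddCircle (2 * Real.pi)) = ((-φ : ℝ) : AddCircle (2 * Real.pi)) :=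
            coe_eq_coe k (by rw [hk]; ring)
      _ = _ := by rw [neg_coe, ← self_neg_circle hz]
    · refine Or.inr ?_
      rw [hneg]
      refine Prod.ext (coe_eq_coe k (by rw [hk]; ring)) ?_
      calc (ψ' : AddCircle (2 * Real.pi)) = (ψ : AddCircle (2 * Real.pi)) :=
            coe_eq_coe m (by rw [hm]; ring)
      _ = _ := by rw [self_neg_circle hz]; rfl
  · refine Or.inr ?_
    rw [hneg]
    exact Prod.ext (coe_eq_coe k (by rw [hk]; ring)) (coe_eq_coe m (by rw [hm]; ring))

theorem continuous_diagSU : Continuous diagSU := by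
  apply Continuous.subtype_mk
  apply continuous_matrix
  intro i j
  fin_cases i <;> fin_cases j <;> simp <;> fun_prop

theorem diagSU_eq_of_rel {φ φ' : ℝ} (h : -φ + φ' ∈ AddSubgroup.zmultiples (2 * Real.pi)) :
    diagSU φ' = diagSU φ := by
  obtain ⟨k, hk⟩ := AddSubgroup.mem_zmultiples_iff.mp h
  have h2 : φ' = φ + k • (2 * Real.pi) := by
    rw [zsmul_eq_mul] at hk ⊢
    linarith
  rw [h2, diagSU_period]

/-- The commuting pair of diagonal matrices. -/
def dpair (φ ψ : ℝ) : CommPairs := ⟨(diagSU φ, diagSU ψ), diagSU_comm φ ψ⟩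

theorem dpair_resp (a₁ a₂ b₁ b₂ : ℝ)
    (h1 : QuotientAddGroup.leftRel (AddSubgroup.zmultiples (2 * Real.pi)) a₁ b₁)
    (h2 : QuotientAddGroup.leftRel (AddSubgroup.zmultiples (2 * Real.pi)) a₂ b₂) :
    Quotient.mk commSetoid (dpair a₁ a₂) = Quotient.mk commSetoid (dpair b₁ b₂) := by
  rw [QuotientAddGroup.leftRel_apply] at h1 h2
  rw [show dpair b₁ b₂ = dpair a₁ a₂ by
    unfold dpair
    refine Subtype.ext ?_
    show (diagSU b₁, diagSU b₂) = (diagSU a₁, diagSU a₂)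
    rw [diagSU_eq_of_rel h1, diagSU_eq_of_rel h2]]

/-- The map from the torus to the quotient of commuting pairs. -/
def f1 : AddCircle (2 * Real.pi) × AddCircle (2 * Real.pi) → Quotient commSetoid := fun x =>
  Quotient.liftOn₂' x.1 x.2 (fun φ ψ => Quotient.mk commSetoid (dpair φ ψ)) dpair_resp

theorem f1_mk (φ ψ : ℝ) :
    f1 ((φ : AddCircle (2 * Real.pi)), (ψ : AddCircle (2 * Real.pi))) =
      Quotient.mk commSetoid (dpair φ ψ) := rfl

theorem continuous_f1 : Continuous f1 := by
  have hq : IsOpenQuotientMap (Prod.map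
      (QuotientAddGroup.mk : ℝ → AddCircle (2 * Real.pi))
      (QuotientAddGroup.mk : ℝ → AddCircle (2 * Real.pi))) :=
    QuotientAddGroup.isOpenQuotientMap_mk.prodMap QuotientAddGroup.isOpenQuotientMap_mk
  rw [hq.isQuotientMap.continuous_iff]
  have : (f1 ∘ Prod.map QuotientAddGroup.mk QuotientAddGroup.mk) =
      fun z : ℝ × ℝ => Quotient.mk commSetoid (dpair z.1 z.2) := rfl
  rw [this]
  apply Continuous.comp continuous_quotient_mk'
  apply Continuous.subtype_mk
  exact (continuous_diagSU.comp continuous_fst).prodMk (continuous_diagSU.comp continuous_snd)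

theorem f1_resp (x y : AddCircle (2 * Real.pi) × AddCircle (2 * Real.pi))
    (h : negSetoid.r x y) : f1 x = f1 y := by
  obtain ⟨φ, hφ⟩ := QuotientAddGroup.mk_surjective x.1
  obtain ⟨ψ, hψ⟩ := QuotientAddGroup.mk_surjective x.2
  have hx : x = ((φ : AddCircle (2 * Real.pi)), (ψ : AddCircle (2 * Real.pi))) :=
    Prod.ext hφ.symm hψ.symm
  have key : f1 ((((-φ : ℝ) : AddCircle (2 * Real.pi)), ((-ψ : ℝ) : AddCircle (2 * Real.pi))) :
      AddCircle (2 * Real.pi) × AddCircle (2 * Real.pi)) =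
      f1 ((φ : AddCircle (2 * Real.pi)), (ψ : AddCircle (2 * Real.pi))) := by
    rw [f1_mk, f1_mk]
    have w1 : diagSU φ = (⟨_, weyl_mem⟩ : SU2) * diagSU (-φ) * (⟨_, weyl_mem⟩ : SU2)⁻¹ := by
      rw [weyl_conj, neg_neg]
    have w2 : diagSU ψ = (⟨_, weyl_mem⟩ : SU2) * diagSU (-ψ) * (⟨_, weyl_mem⟩ : SU2)⁻¹ := by
      rw [weyl_conj, neg_neg]
    exact Quotient.sound ⟨⟨_, weyl_mem⟩, w1, w2⟩
  rcases h with rfl | rfl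
  · rfl
  · rw [hx]
    exact key.symm

/-- The descended map between the two quotients. -/
def emap : Quotient negSetoid → Quotient commSetoid := Quotient.lift f1 f1_resp

theorem continuous_emap : Continuous emap := continuous_f1.quotient_lift _

theorem emap_mk (φ ψ : ℝ) :
    emap (Quotient.mk negSetoid ((φ : AddCircle (2 * Real.pi)), (ψ : AddCircle (2 * Real.pi)))) =
      Quotient.mk commSetoid (dpair φ ψ) := rfl

/-- The trace invariants of a commuting pair. -/
def trFun : CommPairs → ℝ × ℝ × ℝ := fun p =>
  ((p.val.1.val.trace).re, (p.val.2.val.trace).re, ((p.val.1 * p.val.2 : SU2).val.trace).re)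

theorem trFun_resp (p q : CommPairs) (h : commSetoid.r p q) : trFun p = trFun q := by
  obtain ⟨g, h1, h2⟩ := h
  have h3 : q.val.1 * q.val.2 = g * (p.val.1 * p.val.2) * g⁻¹ := by rw [h1, h2]; group
  unfold trFun
  rw [h3, h1, h2, trace_conj, trace_conj, trace_conj]

/-- The trace invariants descended to the quotient. -/
def Ftr : Quotient commSetoid → ℝ × ℝ × ℝ := Quotient.lift trFun trFun_resp

theorem continuous_val1 : Continuous fun p : CommPairs => p.val.1.val :=
  continuous_subtype_val.comp (continuous_fst.comp continuous_subtype_val)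

theorem continuous_val2 : Continuous fun p : CommPairs => p.val.2.val :=
  continuous_subtype_val.comp (continuous_snd.comp continuous_subtype_val)

theorem continuous_trFun : Continuous trFun := by
  unfold trFun
  refine Continuous.prodMk ?_ (Continuous.prodMk ?_ ?_)
  · exact Complex.continuous_re.comp continuous_val1.matrix_trace
  · exact Complex.continuous_re.comp continuous_val2.matrix_trace
  · have : Continuous fun p : CommPairs => p.val.1.val * p.val.2.val :=
      continuous_val1.matrix_mul continuous_val2
    exact Complex.continuous_re.comp this.matrix_trace

theorem continuous_Ftr : Continuous Ftr := continuous_trFun.quotient_lift _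

theorem Ftr_emap (φ ψ : ℝ) :
    Ftr (emap (Quotient.mk negSetoid
        ((φ : AddCircle (2 * Real.pi)), (ψ : AddCircle (2 * Real.pi))))) =
      (2 * Real.cos φ, 2 * Real.cos ψ, 2 * Real.cos (φ + ψ)) := by
  rw [emap_mk]
  show trFun (dpair φ ψ) = _
  unfold trFun dpair
  have h3 : (diagSU φ * diagSU ψ : SU2) = diagSU (φ + ψ) := (diagSU_add φ ψ).symm
  rw [h3]
  rw [diag_trace_re, diag_trace_re, diag_trace_re]

theorem eF_inj (x y : Quotient negSetoid) (h : Ftr (emap x) = Ftr (emap y)) : x = y := by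
  obtain ⟨x0, rfl⟩ := Quotient.exists_rep x
  obtain ⟨y0, rfl⟩ := Quotient.exists_rep y
  obtain ⟨φ, hφ⟩ := QuotientAddGroup.mk_surjective x0.1
  obtain ⟨ψ, hψ⟩ := QuotientAddGroup.mk_surjective x0.2
  obtain ⟨φ', hφ'⟩ := QuotientAddGroup.mk_surjective y0.1
  obtain ⟨ψ', hψ'⟩ := QuotientAddGroup.mk_surjective y0.2
  have hx : x0 = ((φ : AddCircle (2 * Real.pi)), (ψ : AddCircle (2 * Real.pi))) :=
    Prod.ext hφ.symm hψ.symm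
  have hy : y0 = ((φ' : AddCircle (2 * Real.pi)), (ψ' : AddCircle (2 * Real.pi))) :=
    Prod.ext hφ'.symm hψ'.symm
  rw [hx, hy] at h ⊢
  rw [Ftr_emap, Ftr_emap, Prod.mk.injEq, Prod.mk.injEq] at h
  obtain ⟨e1, e2, e3⟩ := h
  have c1 : Real.cos φ = Real.cos φ' := by linarith
  have c2 : Real.cos ψ = Real.cos ψ' := by linarith
  have c3 : Real.cos (φ + ψ) = Real.cos (φ' + ψ') := by linarith
  exact Quotient.sound (torus_inj c1 c2 c3)

theorem emap_surj : Function.Surjective emap := by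
  intro c
  obtain ⟨p, rfl⟩ := Quotient.exists_rep c
  obtain ⟨φ, ψ, g, hg1, hg2⟩ := surj_pairs p
  refine ⟨Quotient.mk negSetoid
    ((φ : AddCircle (2 * Real.pi)), (ψ : AddCircle (2 * Real.pi))), ?_⟩
  rw [emap_mk]
  exact Quotient.sound ⟨g, hg1, hg2⟩

theorem emap_inj : Function.Injective emap := fun x y h => eF_inj x y (congrArg Ftr h)

instance : T2Space (Quotient commSetoid) := by
  apply T2Space.of_injective_continuous (f := Ftr) ?_ continuous_Ftr
  intro c c' h
  obtain ⟨x, rfl⟩ := emap_surj c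
  obtain ⟨y, rfl⟩ := emap_surj c'
  exact congrArg emap (eF_inj x y h)

instance fact2pi : Fact (0 < 2 * Real.pi) := ⟨by positivity⟩

instance : CompactSpace (Quotient negSetoid) := Quotient.compactSpace

/-- The moduli space of the 2-torus: the map `(φ, ψ) ↦ (diag(e^{iφ}, e^{−iφ}),
diag(e^{iψ}, e^{−iψ}))` descends to a homeomorphism from `(ℝ/2πℤ)²/±` onto the
quotient of the set of commuting pairs of SU(2) by simultaneous conjugation. -/
theorem stmt12 :
    ∃ h : Quotient negSetoid ≃ₜ Quotient commSetoid,
      ∀ φ ψ : ℝ,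
        h (Quotient.mk negSetoid ((φ : AddCircle (2 * Real.pi)),
            (ψ : AddCircle (2 * Real.pi)))) =
          Quotient.mk commSetoid ⟨(diagSU φ, diagSU ψ), diagSU_comm φ ψ⟩ := by
  have hbij : Function.Bijective emap := ⟨emap_inj, emap_surj⟩
  refine ⟨Continuous.homeoOfEquivCompactToT2 (f := Equiv.ofBijective emap hbij)
    continuous_emap, ?_⟩
  intro φ ψ
  exact emap_mk φ ψ

end
end
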